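/- For L = 2 measurements given by U^{(1)} = I_d (the identity) and U^{(2)} = U, the multi-measurement coefficients reduce to the two-basis submatrix coefficients: 𝒮_k = 1 + s_k for every k = 1,…,2d−1. -/

import Mathlib

open scoped BigOperators Matrix ComplexConjugate ComplexOrder

/-- Shannon entropy of a finite real vector (natural logarithm). -/
noncomputable def shannonEntropy {n : Type*} [Fintype n] (x : n → ℝ) : ℝ :=
  -∑ i, x i * Real.log (x i)

/-- Von Neumann entropy of a Hermitian matrix, `-∑ λᵢ ln λᵢ`. -/
noncomputable def vonNeumannEntropy {d : ℕ} {ρ : Matrix (Fin d) (Fin d) ℂ}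
    (hρ : ρ.IsHermitian) : ℝ :=
  -∑ i, hρ.eigenvalues i * Real.log (hρ.eigenvalues i)

/-- The operator norm (largest singular value) of the submatrix of `U` with rows `I`
and columns `J`, expressed as the supremum of `|⟨x, U y⟩|` over unit vectors supported
on `I` resp. `J`. -/
noncomputable def subOpNorm {d : ℕ} (U : Matrix (Fin d) (Fin d) ℂ)
    (I J : Finset (Fin d)) : ℝ :=
  sSup { r : ℝ | ∃ (x : I → ℂ) (y : J → ℂ),
    (∑ i, ‖x i‖ ^ 2 = 1) ∧ (∑ j, ‖y j‖ ^ 2 = 1) ∧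
    r = ‖∑ i : I, ∑ j : J, (starRingEnd ℂ) (x i) * U i.1 j.1 * y j‖ }

/-- `sCoef U k` is the coefficient `s_k`: the maximal operator norm of a submatrix of `U`
of class `k`, i.e. with `#rows + #cols = k + 1` (for `k = 0` the set is empty and the
supremum equals `0`). -/
noncomputable def sCoef {d : ℕ} (U : Matrix (Fin d) (Fin d) ℂ) (k : ℕ) : ℝ :=
  sSup { r : ℝ | ∃ I J : Finset (Fin d), I.Nonempty ∧ J.Nonempty ∧
    I.card + J.card = k + 1 ∧ r = subOpNorm U I J }

/-- The vector `W = (s₁, s₂ - s₁, …, s_d - s_{d-1})`. -/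
noncomputable def Wvec {d : ℕ} (U : Matrix (Fin d) (Fin d) ℂ) : Fin d → ℝ :=
  fun k => sCoef U (k.val + 1) - (if k.val = 0 then 0 else sCoef U k.val)

/-- The operator norm (largest singular value) of the `d × |S|` matrix whose columns are
the columns `u_i^{(j)}` of the unitaries `U j`, for `(i, j) ∈ S`. -/
noncomputable def colOpNorm {d L : ℕ} (U : Fin L → Matrix (Fin d) (Fin d) ℂ)
    (S : Finset (Fin d × Fin L)) : ℝ :=
  sSup { r : ℝ | ∃ (x : Fin d → ℂ) (y : S → ℂ),
    (∑ a, ‖x a‖ ^ 2 = 1) ∧ (∑ s, ‖y s‖ ^ 2 = 1) ∧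
    r = ‖∑ a, ∑ s : S, (starRingEnd ℂ) (x a) * U s.1.2 a s.1.1 * y s‖ }

/-- `multiS U k` is the coefficient `𝒮_k`: the maximal squared operator norm of a
`d × (k+1)` matrix formed by `k + 1` columns taken from the concatenation of the
unitaries `U j`. -/
noncomputable def multiS {d L : ℕ} (U : Fin L → Matrix (Fin d) (Fin d) ℂ) (k : ℕ) : ℝ :=
  (sSup { r : ℝ | ∃ S : Finset (Fin d × Fin L), S.card = k + 1 ∧ r = colOpNorm U S }) ^ 2


section Helpers
variable {d : ℕ}


lemma normsq_eq (z : ℂ) : ‖z‖^2 = ((starRingEnd ℂ) z * z).re := by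
  rw [mul_comm, Complex.mul_conj, Complex.ofReal_re, Complex.normSq_eq_norm_sq]

lemma expand_sq (z w : ℂ) : ‖z + w‖^2 = ‖z‖^2 + ‖w‖^2 + 2 * ((starRingEnd ℂ) z * w).re := by
  rw [normsq_eq, normsq_eq, normsq_eq]
  have h : (starRingEnd ℂ) (z + w) * (z + w) =
      (starRingEnd ℂ) z * z + (starRingEnd ℂ) w * w +
      ((starRingEnd ℂ) z * w + (starRingEnd ℂ) ((starRingEnd ℂ) z * w)) := by
    simp only [map_add, map_mul, Complex.conj_conj]
    ring
  rw [h]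
  simp [Complex.add_re, Complex.conj_re]
  ring

lemma cs_complex {ι : Type*} [Fintype ι] (x w : ι → ℂ) :
    ‖∑ i, (starRingEnd ℂ) (x i) * w i‖ ≤
      Real.sqrt (∑ i, ‖x i‖^2) * Real.sqrt (∑ i, ‖w i‖^2) := by
  calc ‖∑ i, (starRingEnd ℂ) (x i) * w i‖ ≤ ∑ i, ‖(starRingEnd ℂ) (x i) * w i‖ :=
        norm_sum_le _ _
    _ = ∑ i, ‖x i‖ * ‖w i‖ := by simp [norm_mul]
    _ ≤ Real.sqrt (∑ i, ‖x i‖^2) * Real.sqrt (∑ i, ‖w i‖^2) := by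
        have h := Finset.sum_mul_sq_le_sq_mul_sq Finset.univ (fun i => ‖x i‖) (fun i => ‖w i‖)
        have h1 : (0:ℝ) ≤ ∑ i, ‖x i‖ * ‖w i‖ :=
          Finset.sum_nonneg fun i _ => mul_nonneg (norm_nonneg _) (norm_nonneg _)
        have := Real.sqrt_le_sqrt h
        rw [Real.sqrt_mul (Finset.sum_nonneg fun i _ => sq_nonneg _)] at this
        rwa [Real.sqrt_sq h1] at this


lemma sum_S_split {M : Type*} [AddCommMonoid M] (S : Finset (Fin d × Fin 2))
    (F : Fin d × Fin 2 → M) (hF : ∀ pt ∉ S, F pt = 0) :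
    ∑ s : S, F ↑s = ∑ i, F (i, 0) + ∑ i, F (i, 1) := by
  rw [Finset.sum_coe_sort S F, Finset.sum_subset (Finset.subset_univ S)
    (fun pt _ h => hF pt h), Fintype.sum_prod_type]
  rw [← Finset.sum_add_distrib]
  congr 1
  ext i
  exact Fin.sum_univ_two _

lemma sum_I_split {M : Type*} [AddCommMonoid M] (I : Finset (Fin d))
    (F : Fin d → M) (hF : ∀ i ∉ I, F i = 0) :
    ∑ i : I, F ↑i = ∑ i, F i := by
  rw [Finset.sum_coe_sort I F, Finset.sum_subset (Finset.subset_univ I) (fun i _ h => hF i h)]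

lemma col_orth (U : Matrix (Fin d) (Fin d) ℂ) (hU : U ∈ Matrix.unitaryGroup (Fin d) ℂ)
    (i j : Fin d) :
    ∑ a, (starRingEnd ℂ) (U a i) * U a j = if i = j then 1 else 0 := by
  have h1 : star U * U = 1 := hU.1
  have h2 := congrFun (congrFun h1 i) j
  simpa [Matrix.mul_apply, Matrix.star_apply, Matrix.one_apply] using h2

lemma entry_bound (U : Matrix (Fin d) (Fin d) ℂ) (hU : U ∈ Matrix.unitaryGroup (Fin d) ℂ)
    (a i : Fin d) : ‖U a i‖ ≤ 1 := by
  have h := col_orth U hU i i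
  simp only [if_pos rfl] at h
  have h2 : ∑ b, ‖U b i‖^2 = 1 := by
    have h3 := congrArg Complex.re h
    rw [Complex.re_sum] at h3
    simp only [if_true, eq_self_iff_true, Complex.one_re] at h3
    rw [← h3]
    exact Finset.sum_congr rfl fun b _ => normsq_eq _
  have h4 : ‖U a i‖^2 ≤ 1 := by
    rw [← h2]
    exact Finset.single_le_sum (f := fun b => ‖U b i‖^2) (fun b _ => sq_nonneg _)
      (Finset.mem_univ a)
  nlinarith [norm_nonneg (U a i)]


lemma isometry_sum (U : Matrix (Fin d) (Fin d) ℂ)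
    (hcol : ∀ i j, ∑ a, (starRingEnd ℂ) (U a i) * U a j = if i = j then 1 else 0)
    (q : Fin d → ℂ) :
    ∑ a, ‖∑ i, U a i * q i‖^2 = ∑ i, ‖q i‖^2 := by
  have key : ∑ a, (starRingEnd ℂ) (∑ i, U a i * q i) * (∑ j, U a j * q j)
      = ∑ i, (starRingEnd ℂ) (q i) * q i := by
    have step1 : ∀ a, (starRingEnd ℂ) (∑ i, U a i * q i) * (∑ j, U a j * q j)
        = ∑ i, ∑ j, ((starRingEnd ℂ) (q i) * q j) *
            ((starRingEnd ℂ) (U a i) * U a j) := by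
      intro a
      rw [map_sum, Finset.sum_mul_sum]
      refine Finset.sum_congr rfl fun i _ => Finset.sum_congr rfl fun j _ => ?_
      rw [map_mul]
      ring
    calc ∑ a, (starRingEnd ℂ) (∑ i, U a i * q i) * (∑ j, U a j * q j)
        = ∑ a, ∑ i, ∑ j, ((starRingEnd ℂ) (q i) * q j) *
            ((starRingEnd ℂ) (U a i) * U a j) := Finset.sum_congr rfl fun a _ => step1 a
      _ = ∑ i, ∑ j, ((starRingEnd ℂ) (q i) * q j) * ∑ a, (starRingEnd ℂ) (U a i) * U a j := by
          rw [Finset.sum_comm]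
          refine Finset.sum_congr rfl fun i _ => ?_
          rw [Finset.sum_comm]
          refine Finset.sum_congr rfl fun j _ => ?_
          rw [Finset.mul_sum]
      _ = ∑ i, (starRingEnd ℂ) (q i) * q i := by
          refine Finset.sum_congr rfl fun i _ => ?_
          simp [hcol]
  have := congrArg Complex.re key
  rw [Complex.re_sum, Complex.re_sum] at this
  calc ∑ a, ‖∑ i, U a i * q i‖^2
      = ∑ a, ((starRingEnd ℂ) (∑ i, U a i * q i) * (∑ j, U a j * q j)).re :=
        Finset.sum_congr rfl fun a _ => normsq_eq _
    _ = ∑ i, ((starRingEnd ℂ) (q i) * q i).re := this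
    _ = ∑ i, ‖q i‖^2 := (Finset.sum_congr rfl fun i _ => (normsq_eq _).symm)

/-- The master expansion: `‖p + Uq‖² = ‖p‖² + ‖q‖² + 2 Re⟨p, Uq⟩`. -/
lemma master_expand (U : Matrix (Fin d) (Fin d) ℂ)
    (hcol : ∀ i j, ∑ a, (starRingEnd ℂ) (U a i) * U a j = if i = j then 1 else 0)
    (p q : Fin d → ℂ) :
    ∑ a, ‖p a + ∑ i, U a i * q i‖^2
      = ∑ i, ‖p i‖^2 + ∑ i, ‖q i‖^2
        + 2 * (∑ i, ∑ j, (starRingEnd ℂ) (p i) * U i j * q j).re := by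
  have step : ∀ a, ‖p a + ∑ i, U a i * q i‖^2
      = ‖p a‖^2 + ‖∑ i, U a i * q i‖^2
        + 2 * ((starRingEnd ℂ) (p a) * ∑ i, U a i * q i).re := fun a => expand_sq _ _
  rw [Finset.sum_congr rfl fun a _ => step a]
  rw [Finset.sum_add_distrib, Finset.sum_add_distrib, isometry_sum U hcol q]
  congr 1
  rw [← Finset.mul_sum, ← Complex.re_sum]
  congr 2
  refine Finset.sum_congr rfl fun a _ => ?_
  rw [Finset.mul_sum]
  refine Finset.sum_congr rfl fun i _ => ?_
  ring


lemma unit_entry_le_one {ι : Type*} [Fintype ι] {x : ι → ℂ} (hx : ∑ i, ‖x i‖^2 = 1)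
    (i : ι) : ‖x i‖ ≤ 1 := by
  have h : ‖x i‖^2 ≤ 1 := by
    rw [← hx]
    exact Finset.single_le_sum (f := fun j => ‖x j‖^2) (fun j _ => sq_nonneg _)
      (Finset.mem_univ i)
  nlinarith [norm_nonneg (x i)]

lemma subOpNorm_elt_bound {U : Matrix (Fin d) (Fin d) ℂ}
    (hent : ∀ a i, ‖U a i‖ ≤ 1) {I J : Finset (Fin d)} {r : ℝ}
    (hr : r ∈ { r : ℝ | ∃ (x : I → ℂ) (y : J → ℂ),
      (∑ i, ‖x i‖ ^ 2 = 1) ∧ (∑ j, ‖y j‖ ^ 2 = 1) ∧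
      r = ‖∑ i : I, ∑ j : J, (starRingEnd ℂ) (x i) * U i.1 j.1 * y j‖ }) :
    r ≤ (d : ℝ)^2 := by
  obtain ⟨x, y, hx, hy, rfl⟩ := hr
  calc ‖∑ i : I, ∑ j : J, (starRingEnd ℂ) (x i) * U i.1 j.1 * y j‖
      ≤ ∑ i : I, ‖∑ j : J, (starRingEnd ℂ) (x i) * U i.1 j.1 * y j‖ := norm_sum_le _ _
    _ ≤ ∑ i : I, ∑ j : J, ‖(starRingEnd ℂ) (x i) * U i.1 j.1 * y j‖ :=
        Finset.sum_le_sum fun i _ => norm_sum_le _ _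
    _ ≤ ∑ _i : I, ∑ _j : J, (1:ℝ) := by
        refine Finset.sum_le_sum fun i _ => Finset.sum_le_sum fun j _ => ?_
        rw [norm_mul, norm_mul, RingHomIsometric.norm_map]
        have h1 := unit_entry_le_one hx i
        have h2 := unit_entry_le_one hy j
        have h3 := hent i.1 j.1
        exact mul_le_one₀ (mul_le_one₀ h1 (norm_nonneg _) h3) (norm_nonneg _) h2
    _ ≤ (d:ℝ)^2 := by
        simp only [Finset.sum_const, nsmul_eq_mul, mul_one, Finset.card_univ, Fintype.card_coe]
        have h1 : (I.card : ℝ) ≤ d := by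
          exact_mod_cast (Finset.card_le_univ I).trans (le_of_eq (Finset.card_fin d))
        have h2 : (J.card : ℝ) ≤ d := by
          exact_mod_cast (Finset.card_le_univ J).trans (le_of_eq (Finset.card_fin d))
        have h1' : (0:ℝ) ≤ I.card := Nat.cast_nonneg _
        have h2' : (0:ℝ) ≤ J.card := Nat.cast_nonneg _
        nlinarith

lemma subOpNorm_nonneg (U : Matrix (Fin d) (Fin d) ℂ) (I J : Finset (Fin d)) :
    0 ≤ subOpNorm U I J :=
  Real.sSup_nonneg fun r hr => by obtain ⟨x, y, _, _, rfl⟩ := hr; exact norm_nonneg _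

lemma sCoef_nonneg (U : Matrix (Fin d) (Fin d) ℂ) (k : ℕ) : 0 ≤ sCoef U k :=
  Real.sSup_nonneg fun r hr => by
    obtain ⟨I, J, _, _, _, rfl⟩ := hr; exact subOpNorm_nonneg U I J


-- indicator unit vector on a nonempty finset subtype
lemma exists_unit_vec {I : Finset (Fin d)} (hI : I.Nonempty) :
    ∃ x : I → ℂ, ∑ i, ‖x i‖^2 = 1 := by
  obtain ⟨i0, hi0⟩ := hI
  refine ⟨fun i => if i = ⟨i0, hi0⟩ then 1 else 0, ?_⟩
  rw [Finset.sum_eq_single (⟨i0, hi0⟩ : I)]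
  · simp
  · intro b _ hb; simp [hb]
  · intro h; exact absurd (Finset.mem_univ _) h
lemma V_entry_bound {U : Matrix (Fin d) (Fin d) ℂ} (hent : ∀ a i, ‖U a i‖ ≤ 1)
    (j : Fin 2) (a i : Fin d) : ‖(![(1 : Matrix (Fin d) (Fin d) ℂ), U]) j a i‖ ≤ 1 := by
  fin_cases j
  · simp only [Fin.mk_zero, Matrix.cons_val_zero, Matrix.one_apply]
    split <;> simp
  · simpa [Fin.mk_one] using hent a i

lemma colOpNorm_elt_bound {U : Matrix (Fin d) (Fin d) ℂ} (hent : ∀ a i, ‖U a i‖ ≤ 1)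
    {S : Finset (Fin d × Fin 2)} {r : ℝ}
    (hr : r ∈ { r : ℝ | ∃ (x : Fin d → ℂ) (y : S → ℂ),
      (∑ a, ‖x a‖ ^ 2 = 1) ∧ (∑ s, ‖y s‖ ^ 2 = 1) ∧
      r = ‖∑ a, ∑ s : S, (starRingEnd ℂ) (x a) *
        (![(1 : Matrix (Fin d) (Fin d) ℂ), U]) s.1.2 a s.1.1 * y s‖ }) :
    r ≤ (d : ℝ) * S.card := by
  obtain ⟨x, y, hx, hy, rfl⟩ := hr
  calc ‖∑ a, ∑ s : S, (starRingEnd ℂ) (x a) *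
        (![(1 : Matrix (Fin d) (Fin d) ℂ), U]) s.1.2 a s.1.1 * y s‖
      ≤ ∑ a, ∑ s : S, ‖(starRingEnd ℂ) (x a) *
        (![(1 : Matrix (Fin d) (Fin d) ℂ), U]) s.1.2 a s.1.1 * y s‖ :=
        (norm_sum_le _ _).trans (Finset.sum_le_sum fun a _ => norm_sum_le _ _)
    _ ≤ ∑ _a : Fin d, ∑ _s : S, (1:ℝ) := by
        refine Finset.sum_le_sum fun a _ => Finset.sum_le_sum fun s _ => ?_
        rw [norm_mul, norm_mul, RingHomIsometric.norm_map]
        exact mul_le_one₀ (mul_le_one₀ (unit_entry_le_one hx a) (norm_nonneg _)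
          (V_entry_bound hent _ _ _)) (norm_nonneg _) (unit_entry_le_one hy s)
    _ = (d : ℝ) * S.card := by
        simp [Finset.sum_const, Finset.card_univ]



lemma card_IJ (S : Finset (Fin d × Fin 2)) :
    (Finset.univ.filter (fun i => (i, (0:Fin 2)) ∈ S)).card
      + (Finset.univ.filter (fun i => (i, (1:Fin 2)) ∈ S)).card = S.card := by
  have h0 : (Finset.univ.filter (fun i => (i, (0:Fin 2)) ∈ S)).card
      = (S.filter (fun s => s.2 = 0)).card := by
    refine Finset.card_bij' (fun i _ => (i, 0)) (fun s _ => s.1) ?_ ?_ ?_ ?_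
    · intro i hi
      simp only [Finset.mem_filter, Finset.mem_univ, true_and] at hi ⊢
      exact ⟨hi, trivial⟩
    · intro s hs
      simp only [Finset.mem_filter, Finset.mem_univ, true_and] at hs ⊢
      have : (s.1, (0:Fin 2)) = s := by
        ext
        · rfl
        · exact (congrArg Fin.val hs.2).symm
      rw [this]; exact hs.1
    · intro i _; rfl
    · intro s hs
      simp only [Finset.mem_filter] at hs
      ext
      · rfl
      · exact (congrArg Fin.val hs.2).symm
  have h1 : (Finset.univ.filter (fun i => (i, (1:Fin 2)) ∈ S)).card
      = (S.filter (fun s => s.2 = 1)).card := by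
    refine Finset.card_bij' (fun i _ => (i, 1)) (fun s _ => s.1) ?_ ?_ ?_ ?_
    · intro i hi
      simp only [Finset.mem_filter, Finset.mem_univ, true_and] at hi ⊢
      exact ⟨hi, trivial⟩
    · intro s hs
      simp only [Finset.mem_filter, Finset.mem_univ, true_and] at hs ⊢
      have : (s.1, (1:Fin 2)) = s := by
        ext
        · rfl
        · exact (congrArg Fin.val hs.2).symm
      rw [this]; exact hs.1
    · intro i _; rfl
    · intro s hs
      simp only [Finset.mem_filter] at hs
      ext
      · rfl
      · exact (congrArg Fin.val hs.2).symm
  rw [h0, h1]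
  have htwo : ∀ j : Fin 2, j = 1 ↔ ¬ j = 0 := by decide
  have hneg : S.filter (fun s => s.2 = 1) = S.filter (fun s => ¬ s.2 = 0) :=
    Finset.filter_congr fun s _ => htwo s.2
  rw [hneg]
  exact Finset.card_filter_add_card_filter_not _

lemma le_subOpNorm {U : Matrix (Fin d) (Fin d) ℂ} (hent : ∀ a i, ‖U a i‖ ≤ 1)
    (I J : Finset (Fin d)) (x : I → ℂ) (y : J → ℂ)
    (hx : ∑ i, ‖x i‖^2 = 1) (hy : ∑ j, ‖y j‖^2 = 1) :
    ‖∑ i : I, ∑ j : J, (starRingEnd ℂ) (x i) * U i.1 j.1 * y j‖ ≤ subOpNorm U I J :=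
  le_csSup ⟨(d:ℝ)^2, fun _ hr => subOpNorm_elt_bound hent hr⟩ ⟨x, y, hx, hy, rfl⟩

lemma subOpNorm_le_sCoef {U : Matrix (Fin d) (Fin d) ℂ} (hent : ∀ a i, ‖U a i‖ ≤ 1)
    {I J : Finset (Fin d)} (hI : I.Nonempty) (hJ : J.Nonempty) {k : ℕ}
    (hcard : I.card + J.card = k + 1) : subOpNorm U I J ≤ sCoef U k := by
  apply le_csSup
  · refine ⟨(d:ℝ)^2, fun r hr => ?_⟩
    obtain ⟨I', J', _, _, _, rfl⟩ := hr
    exact Real.sSup_le (fun r hr => subOpNorm_elt_bound hent hr) (by positivity)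
  · exact ⟨I, J, hI, hJ, hcard, rfl⟩

lemma Z_restrict (U : Matrix (Fin d) (Fin d) ℂ) (p q : Fin d → ℂ) (I J : Finset (Fin d))
    (hp : ∀ i ∉ I, p i = 0) (hq : ∀ j ∉ J, q j = 0) :
    ∑ i : I, ∑ j : J, (starRingEnd ℂ) (p i.1) * U i.1 j.1 * q j.1
      = ∑ i, ∑ j, (starRingEnd ℂ) (p i) * U i j * q j := by
  have inner : ∀ i : Fin d, ∑ j : J, (starRingEnd ℂ) (p i) * U i j.1 * q j.1
      = ∑ j, (starRingEnd ℂ) (p i) * U i j * q j := fun i =>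
    sum_I_split J (fun j => (starRingEnd ℂ) (p i) * U i j * q j)
      (fun j hj => by simp [hq j hj])
  calc ∑ i : I, ∑ j : J, (starRingEnd ℂ) (p i.1) * U i.1 j.1 * q j.1
      = ∑ i : I, ∑ j, (starRingEnd ℂ) (p i.1) * U i.1 j * q j :=
        Finset.sum_congr rfl fun i _ => inner i.1
    _ = ∑ i, ∑ j, (starRingEnd ℂ) (p i) * U i j * q j :=
        sum_I_split I (fun i => ∑ j, (starRingEnd ℂ) (p i) * U i j * q j)
          (fun i hi => by simp [hp i hi])

lemma sum_sq_pos_of_ne_zero {p : Fin d → ℂ} (hp : p ≠ 0) : 0 < ∑ i, ‖p i‖^2 := by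
  obtain ⟨i, hi⟩ := Function.ne_iff.1 hp
  have : 0 < ‖p i‖^2 := pow_pos (norm_pos_iff.mpr hi) 2
  exact this.trans_le (Finset.single_le_sum (f := fun j => ‖p j‖^2)
    (fun j _ => sq_nonneg _) (Finset.mem_univ i))

/-- Core upper bound: every element of the `colOpNorm` defining set is at most
`√(1 + sCoef U k)`. -/
lemma core_upper (U : Matrix (Fin d) (Fin d) ℂ) (hU : U ∈ Matrix.unitaryGroup (Fin d) ℂ)
    {k : ℕ} (S : Finset (Fin d × Fin 2)) (hS : S.card = k + 1)
    (x : Fin d → ℂ) (y : S → ℂ) (hx : ∑ a, ‖x a‖^2 = 1) (hy : ∑ s, ‖y s‖^2 = 1) :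
    ‖∑ a, ∑ s : S, (starRingEnd ℂ) (x a) *
        (![(1 : Matrix (Fin d) (Fin d) ℂ), U]) s.1.2 a s.1.1 * y s‖
      ≤ Real.sqrt (1 + sCoef U k) := by
  have hcol := col_orth U hU
  set z : Fin d × Fin 2 → ℂ := fun pt => if h : pt ∈ S then y ⟨pt, h⟩ else 0 with hzdef
  have hz0 : ∀ pt ∉ S, z pt = 0 := fun pt h => dif_neg h
  have hyz : ∀ s : S, y s = z s.1 := by
    intro s
    simp only [hzdef, dif_pos s.2, Subtype.coe_eta]
  set p : Fin d → ℂ := fun i => z (i, 0) with hpdef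
  set q : Fin d → ℂ := fun i => z (i, 1) with hqdef
  set w : Fin d → ℂ := fun a => p a + ∑ i, U a i * q i with hwdef
  -- Step A: rearrangement
  have hrearr : ∑ a, ∑ s : S, (starRingEnd ℂ) (x a) *
      (![(1 : Matrix (Fin d) (Fin d) ℂ), U]) s.1.2 a s.1.1 * y s
      = ∑ a, (starRingEnd ℂ) (x a) * w a := by
    refine Finset.sum_congr rfl fun a _ => ?_
    have h1 : ∑ s : S, (![(1 : Matrix (Fin d) (Fin d) ℂ), U]) s.1.2 a s.1.1 * y s = w a := by
      have h3 := sum_S_split S (fun pt => (![(1 : Matrix (Fin d) (Fin d) ℂ), U]) pt.2 a pt.1 * z pt)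
        (fun pt h => by simp [hz0 pt h])
      calc ∑ s : S, (![(1 : Matrix (Fin d) (Fin d) ℂ), U]) s.1.2 a s.1.1 * y s
          = ∑ s : S, (fun pt => (![(1 : Matrix (Fin d) (Fin d) ℂ), U]) pt.2 a pt.1 * z pt) s.1 :=
            Finset.sum_congr rfl fun s _ => by rw [hyz s]
        _ = (∑ i, (![(1 : Matrix (Fin d) (Fin d) ℂ), U]) (0:Fin 2) a i * z (i,0))
            + ∑ i, (![(1 : Matrix (Fin d) (Fin d) ℂ), U]) (1:Fin 2) a i * z (i,1) := h3
        _ = w a := by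
            simp only [Matrix.cons_val_zero, Matrix.cons_val_one, Matrix.head_cons, hwdef]
            congr 1
            simp [Matrix.one_apply, ite_mul, hpdef]
    rw [← h1, Finset.mul_sum]
    exact Finset.sum_congr rfl fun s _ => by ring
  rw [hrearr]
  -- Step B: Cauchy-Schwarz
  have hcs := cs_complex x w
  rw [hx, Real.sqrt_one, one_mul] at hcs
  refine hcs.trans ?_
  apply Real.sqrt_le_sqrt
  -- Step C: expansion
  have hexp := master_expand U hcol p q
  have hw2 : ∑ a, ‖w a‖^2 = ∑ i, ‖p i‖^2 + ∑ i, ‖q i‖^2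
      + 2 * (∑ i, ∑ j, (starRingEnd ℂ) (p i) * U i j * q j).re := hexp
  -- Step D: unit split
  have hunit : ∑ i, ‖p i‖^2 + ∑ i, ‖q i‖^2 = 1 := by
    have h3 := sum_S_split S (fun pt => ‖z pt‖^2) (fun pt h => by simp [hz0 pt h])
    rw [← hy]
    calc ∑ i, ‖p i‖^2 + ∑ i, ‖q i‖^2
        = ∑ s : S, (fun pt => ‖z pt‖^2) s.1 := h3.symm
      _ = ∑ s : S, ‖y s‖^2 := Finset.sum_congr rfl fun s _ => by rw [hyz s]
  set Z := ∑ i, ∑ j, (starRingEnd ℂ) (p i) * U i j * q j with hZdef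
  -- Step E
  have hE : 2 * Z.re ≤ sCoef U k := by
    by_cases hp : p = 0
    · have : Z = 0 := by
        rw [hZdef]
        exact Finset.sum_eq_zero fun i _ => Finset.sum_eq_zero fun j _ => by
          rw [hp]; simp
      rw [this]
      simpa using sCoef_nonneg U k
    by_cases hq : q = 0
    · have : Z = 0 := by
        rw [hZdef]
        exact Finset.sum_eq_zero fun i _ => Finset.sum_eq_zero fun j _ => by
          rw [hq]; simp
      rw [this]
      simpa using sCoef_nonneg U k
    · set I : Finset (Fin d) := Finset.univ.filter (fun i => (i, (0:Fin 2)) ∈ S) with hIdef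
      set J : Finset (Fin d) := Finset.univ.filter (fun i => (i, (1:Fin 2)) ∈ S) with hJdef
      have hIJ : I.card + J.card = k + 1 := by rw [hIdef, hJdef, card_IJ S, hS]
      have hsp : ∀ i ∉ I, p i = 0 := by
        intro i hi
        apply hz0
        intro hmem
        exact hi (by rw [hIdef]; exact Finset.mem_filter.2 ⟨Finset.mem_univ _, hmem⟩)
      have hsq : ∀ j ∉ J, q j = 0 := by
        intro j hj
        apply hz0
        intro hmem
        exact hj (by rw [hJdef]; exact Finset.mem_filter.2 ⟨Finset.mem_univ _, hmem⟩)
      have hIne : I.Nonempty := by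
        obtain ⟨i, hi⟩ := Function.ne_iff.1 hp
        exact ⟨i, by by_contra h; exact hi (hsp i h)⟩
      have hJne : J.Nonempty := by
        obtain ⟨j, hj⟩ := Function.ne_iff.1 hq
        exact ⟨j, by by_contra h; exact hj (hsq j h)⟩
      set np := Real.sqrt (∑ i, ‖p i‖^2) with hnp
      set nq := Real.sqrt (∑ i, ‖q i‖^2) with hnq
      have hnp0 : 0 < np := Real.sqrt_pos.2 (sum_sq_pos_of_ne_zero hp)
      have hnq0 : 0 < nq := Real.sqrt_pos.2 (sum_sq_pos_of_ne_zero hq)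
      have hnp2 : np^2 = ∑ i, ‖p i‖^2 := Real.sq_sqrt (Finset.sum_nonneg fun _ _ => sq_nonneg _)
      have hnq2 : nq^2 = ∑ i, ‖q i‖^2 := Real.sq_sqrt (Finset.sum_nonneg fun _ _ => sq_nonneg _)
      -- normalized vectors
      set x' : I → ℂ := fun i => p i.1 / (np : ℂ) with hx'def
      set y' : J → ℂ := fun j => q j.1 / (nq : ℂ) with hy'def
      have hx'unit : ∑ i, ‖x' i‖^2 = 1 := by
        have : ∑ i : I, ‖p i.1‖^2 = ∑ i, ‖p i‖^2 :=
          sum_I_split I (fun i => ‖p i‖^2) (fun i hi => by simp [hsp i hi])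
        rw [hx'def]
        simp only [norm_div, Complex.norm_real, div_pow]
        rw [← Finset.sum_div]
        rw [this, Real.norm_eq_abs, abs_of_pos hnp0, ← hnp2]
        field_simp
      have hy'unit : ∑ j, ‖y' j‖^2 = 1 := by
        have : ∑ j : J, ‖q j.1‖^2 = ∑ j, ‖q j‖^2 :=
          sum_I_split J (fun j => ‖q j‖^2) (fun j hj => by simp [hsq j hj])
        rw [hy'def]
        simp only [norm_div, Complex.norm_real, div_pow]
        rw [← Finset.sum_div]
        rw [this, Real.norm_eq_abs, abs_of_pos hnq0, ← hnq2]
        field_simp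
      have hval : ∑ i : I, ∑ j : J, (starRingEnd ℂ) (x' i) * U i.1 j.1 * y' j
          = Z / ((np : ℂ) * (nq : ℂ)) := by
        rw [hZdef, ← Z_restrict U p q I J hsp hsq]
        rw [Finset.sum_div]
        refine Finset.sum_congr rfl fun i _ => ?_
        rw [Finset.sum_div]
        refine Finset.sum_congr rfl fun j _ => ?_
        rw [hx'def, hy'def]
        simp only [map_div₀, Complex.conj_ofReal]
        field_simp
      have hent := entry_bound U hU
      have h1 : ‖Z / ((np:ℂ) * (nq:ℂ))‖ ≤ subOpNorm U I J := by
        rw [← hval]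
        exact le_subOpNorm hent I J x' y' hx'unit hy'unit
      have h1' : ‖Z‖ / (np * nq) ≤ subOpNorm U I J := by
        rwa [norm_div, norm_mul, Complex.norm_real, Complex.norm_real,
          Real.norm_eq_abs, Real.norm_eq_abs, abs_of_pos hnp0, abs_of_pos hnq0] at h1
      have h2 := subOpNorm_le_sCoef hent hIne hJne hIJ
      have hZre : Z.re ≤ ‖Z‖ := Complex.re_le_norm Z
      have h2ab : 2 * (np * nq) ≤ 1 := by
        have := sq_nonneg (np - nq)
        nlinarith [hnp2, hnq2, hunit]
      have hs0 := sCoef_nonneg U k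
      have hpq : (0:ℝ) < np * nq := mul_pos hnp0 hnq0
      have h3 : ‖Z‖ / (np * nq) ≤ sCoef U k := h1'.trans h2
      have hZn : 2 * ‖Z‖ ≤ 2 * (np * nq) * sCoef U k := by
        have h4 : ‖Z‖ = (‖Z‖ / (np * nq)) * (np * nq) := by field_simp
        have h5 : (‖Z‖ / (np * nq)) * (np * nq) ≤ sCoef U k * (np * nq) :=
          mul_le_mul_of_nonneg_right h3 hpq.le
        rw [h4]
        nlinarith [h5]
      have hh : 2 * (np * nq) * sCoef U k ≤ 1 * sCoef U k :=
        mul_le_mul_of_nonneg_right h2ab hs0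
      linarith [hZre, hZn, hh]
  rw [hw2, hunit]
  linarith [hE]

lemma conj_mul_self (z : ℂ) : (starRingEnd ℂ) z * z = ((‖z‖^2 : ℝ) : ℂ) := by
  rw [mul_comm, Complex.mul_conj, Complex.normSq_eq_norm_sq]

/-- Core lower bound construction. -/
lemma core_lower (U : Matrix (Fin d) (Fin d) ℂ) (hU : U ∈ Matrix.unitaryGroup (Fin d) ℂ)
    (I J : Finset (Fin d)) (x' : I → ℂ) (y' : J → ℂ)
    (hx' : ∑ i, ‖x' i‖^2 = 1) (hy' : ∑ j, ‖y' j‖^2 = 1) :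
    ∃ (x : Fin d → ℂ)
      (y : ↥(I ×ˢ ({0} : Finset (Fin 2)) ∪ J ×ˢ ({1} : Finset (Fin 2))) → ℂ),
      (∑ a, ‖x a‖^2 = 1) ∧ (∑ s, ‖y s‖^2 = 1) ∧
      ‖∑ a, ∑ s : ↥(I ×ˢ ({0} : Finset (Fin 2)) ∪ J ×ˢ ({1} : Finset (Fin 2))),
          (starRingEnd ℂ) (x a) * (![(1 : Matrix (Fin d) (Fin d) ℂ), U]) s.1.2 a s.1.1 * y s‖
        = Real.sqrt (1 + ‖∑ i : I, ∑ j : J, (starRingEnd ℂ) (x' i) * U i.1 j.1 * y' j‖) := by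
  have hcol := col_orth U hU
  set S : Finset (Fin d × Fin 2) := I ×ˢ ({0} : Finset (Fin 2)) ∪ J ×ˢ ({1} : Finset (Fin 2))
    with hSdef
  have hmem0 : ∀ i : Fin d, ((i, (0 : Fin 2)) ∈ S) ↔ i ∈ I := by
    intro i
    rw [hSdef]
    simp only [Finset.mem_union, Finset.mem_product, Finset.mem_singleton]
    have h01 : ¬ ((0 : Fin 2) = 1) := by decide
    tauto
  have hmem1 : ∀ i : Fin d, ((i, (1 : Fin 2)) ∈ S) ↔ i ∈ J := by
    intro i
    rw [hSdef]
    simp only [Finset.mem_union, Finset.mem_product, Finset.mem_singleton]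
    have h01 : ¬ ((1 : Fin 2) = 0) := by decide
    tauto
  set ex : Fin d → ℂ := fun i => if h : i ∈ I then x' ⟨i, h⟩ else 0 with hexdef
  set ey : Fin d → ℂ := fun i => if h : i ∈ J then y' ⟨i, h⟩ else 0 with heydef
  have hex0 : ∀ i ∉ I, ex i = 0 := fun i h => dif_neg h
  have hey0 : ∀ i ∉ J, ey i = 0 := fun i h => dif_neg h
  have hexeq : ∀ i : I, ex i.1 = x' i := by
    intro i
    simp only [hexdef, dif_pos i.2, Subtype.coe_eta]
  have heyeq : ∀ j : J, ey j.1 = y' j := by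
    intro j
    simp only [heydef, dif_pos j.2, Subtype.coe_eta]
  have hex_unit : ∑ i, ‖ex i‖^2 = 1 := by
    rw [← sum_I_split I (fun i => ‖ex i‖^2) (fun i h => by simp [hex0 i h]), ← hx']
    exact Finset.sum_congr rfl fun i _ => by rw [hexeq i]
  have hey_unit : ∑ j, ‖ey j‖^2 = 1 := by
    rw [← sum_I_split J (fun j => ‖ey j‖^2) (fun j h => by simp [hey0 j h]), ← hy']
    exact Finset.sum_congr rfl fun j _ => by rw [heyeq j]
  set Z : ℂ := ∑ i : I, ∑ j : J, (starRingEnd ℂ) (x' i) * U i.1 j.1 * y' j with hZdef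
  have hZfull : Z = ∑ i, ∑ j, (starRingEnd ℂ) (ex i) * U i j * ey j := by
    rw [hZdef, ← Z_restrict U ex ey I J hex0 hey0]
    refine Finset.sum_congr rfl fun i _ => Finset.sum_congr rfl fun j _ => ?_
    rw [hexeq i, heyeq j]
  set r : ℝ := ‖Z‖ with hrdef
  have hr0 : 0 ≤ r := norm_nonneg _
  -- phase
  set φ : ℂ := if Z = 0 then 1 else (starRingEnd ℂ) Z / ((‖Z‖ : ℝ) : ℂ) with hφdef
  have hφnorm : ‖φ‖ = 1 := by
    rw [hφdef]
    split
    · simp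
    · rename_i hZne
      rw [norm_div, RingHomIsometric.norm_map, Complex.norm_real, Real.norm_eq_abs,
        abs_of_pos (norm_pos_iff.2 hZne), div_self (norm_ne_zero_iff.2 hZne)]
  have hφZ : φ * Z = ((r : ℝ) : ℂ) := by
    rw [hφdef]
    split
    · rename_i hZe
      simp [hZe, hrdef]
    · rename_i hZne
      have hne : ((‖Z‖ : ℝ) : ℂ) ≠ 0 := by
        simpa [Complex.ofReal_ne_zero] using norm_ne_zero_iff.2 hZne
      rw [div_mul_eq_mul_div, conj_mul_self, hrdef]
      rw [show ((‖Z‖^2 : ℝ) : ℂ) = ((‖Z‖ : ℝ) : ℂ)^2 by push_cast; ring]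
      rw [sq, mul_div_assoc, div_self hne, mul_one]
  -- scaled vectors
  set c2 : ℂ := (((Real.sqrt 2 : ℝ) : ℂ))⁻¹ with hc2def
  have hc2conj : (starRingEnd ℂ) c2 = c2 := by
    rw [hc2def, map_inv₀, Complex.conj_ofReal]
  have hc2sq : c2 * c2 = ((1/2 : ℝ) : ℂ) := by
    rw [hc2def, ← mul_inv, ← Complex.ofReal_mul, Real.mul_self_sqrt (by norm_num)]
    norm_num
  have hc2norm : ‖c2‖^2 = 1/2 := by
    rw [hc2def, norm_inv, Complex.norm_real, Real.norm_eq_abs,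
      abs_of_pos (Real.sqrt_pos.2 (by norm_num))]
    rw [← Real.sqrt_inv]
    rw [Real.sq_sqrt (by norm_num)]
    norm_num
  set p : Fin d → ℂ := fun i => c2 * (starRingEnd ℂ) φ * ex i with hpdef
  set q : Fin d → ℂ := fun i => c2 * ey i with hqdef
  set g : Fin d × Fin 2 → ℂ := fun pt => if pt.2 = 0 then p pt.1 else q pt.1 with hgdef
  have hg0 : ∀ pt ∉ S, g pt = 0 := by
    rintro ⟨i, j⟩ hpt
    fin_cases j
    · have : i ∉ I := fun h => hpt ((hmem0 i).2 h)
      simp [hgdef, hpdef, hex0 i this]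
    · have : i ∉ J := fun h => hpt ((hmem1 i).2 h)
      have h10 : ¬ ((1 : Fin 2) = 0) := by decide
      simp [hgdef, hqdef, hey0 i this, h10]
  have hgp : ∀ i, g (i, 0) = p i := fun i => by simp [hgdef]
  have hgq : ∀ i, g (i, 1) = q i := by
    intro i
    have h10 : ¬ ((1 : Fin 2) = 0) := by decide
    simp [hgdef, h10]
  -- p, q norms
  have hpnorm : ∑ i, ‖p i‖^2 = 1/2 := by
    have : ∀ i, ‖p i‖^2 = (1/2) * ‖ex i‖^2 := by
      intro i
      rw [hpdef]
      simp only [norm_mul, RingHomIsometric.norm_map, hφnorm, mul_one]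
      rw [mul_pow, hc2norm]
    rw [Finset.sum_congr rfl fun i _ => this i, ← Finset.mul_sum, hex_unit, mul_one]
  have hqnorm : ∑ i, ‖q i‖^2 = 1/2 := by
    have : ∀ i, ‖q i‖^2 = (1/2) * ‖ey i‖^2 := by
      intro i
      rw [hqdef]
      simp only [norm_mul]
      rw [mul_pow, hc2norm]
    rw [Finset.sum_congr rfl fun i _ => this i, ← Finset.mul_sum, hey_unit, mul_one]
  -- cross term
  set Zpq : ℂ := ∑ i, ∑ j, (starRingEnd ℂ) (p i) * U i j * q j with hZpqdef
  have hZpq : Zpq = ((1/2 : ℝ) : ℂ) * (φ * Z) := by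
    calc Zpq = ∑ i, ∑ j, ((1/2 : ℝ) : ℂ) *
          (φ * ((starRingEnd ℂ) (ex i) * U i j * ey j)) := by
          rw [hZpqdef]
          refine Finset.sum_congr rfl fun i _ => Finset.sum_congr rfl fun j _ => ?_
          rw [hpdef, hqdef]
          simp only [map_mul, hc2conj, Complex.conj_conj]
          rw [← hc2sq]
          ring
      _ = ((1/2 : ℝ) : ℂ) * (φ * Z) := by
          rw [hZfull]
          simp only [Finset.mul_sum]
  have hZpq_re : Zpq.re = r / 2 := by
    rw [hZpq, hφZ, ← Complex.ofReal_mul, Complex.ofReal_re]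
    ring
  -- w and its norm
  set w : Fin d → ℂ := fun a => p a + ∑ i, U a i * q i with hwdef
  have hw_sum : ∑ a, ‖w a‖^2 = 1 + r := by
    have := master_expand U hcol p q
    rw [hwdef]
    rw [this, hpnorm, hqnorm, ← hZpqdef, hZpq_re]
    ring
  set nw : ℝ := Real.sqrt (1 + r) with hnwdef
  have hnwpos : 0 < nw := Real.sqrt_pos.2 (by linarith)
  have hnw2 : nw^2 = 1 + r := Real.sq_sqrt (by linarith)
  set x : Fin d → ℂ := fun a => w a / ((nw : ℝ) : ℂ) with hxdef
  have hx_unit : ∑ a, ‖x a‖^2 = 1 := by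
    have : ∀ a, ‖x a‖^2 = ‖w a‖^2 / nw^2 := by
      intro a
      rw [hxdef]
      simp only [norm_div, Complex.norm_real, Real.norm_eq_abs, abs_of_pos hnwpos, div_pow]
    rw [Finset.sum_congr rfl fun a _ => this a, ← Finset.sum_div, hw_sum, hnw2,
      div_self (by linarith)]
  set y : S → ℂ := fun s => g s.1 with hydef
  have hy_unit : ∑ s, ‖y s‖^2 = 1 := by
    have h3 := sum_S_split S (fun pt => ‖g pt‖^2) (fun pt h => by simp [hg0 pt h])
    calc ∑ s : S, ‖y s‖^2 = ∑ s : S, (fun pt => ‖g pt‖^2) s.1 := rfl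
      _ = (∑ i, ‖g (i,0)‖^2) + ∑ i, ‖g (i,1)‖^2 := h3
      _ = (∑ i, ‖p i‖^2) + ∑ i, ‖q i‖^2 := by
          rw [Finset.sum_congr rfl fun i (_ : i ∈ Finset.univ) =>
              (by rw [hgp i] : ‖g (i,(0:Fin 2))‖^2 = ‖p i‖^2),
            Finset.sum_congr rfl fun i (_ : i ∈ Finset.univ) =>
              (by rw [hgq i] : ‖g (i,(1:Fin 2))‖^2 = ‖q i‖^2)]
      _ = 1 := by rw [hpnorm, hqnorm]; norm_num
  refine ⟨x, y, hx_unit, hy_unit, ?_⟩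
  -- rearrangement
  have hrearr : ∑ a, ∑ s : S, (starRingEnd ℂ) (x a) *
      (![(1 : Matrix (Fin d) (Fin d) ℂ), U]) s.1.2 a s.1.1 * y s
      = ∑ a, (starRingEnd ℂ) (x a) * w a := by
    refine Finset.sum_congr rfl fun a _ => ?_
    have h1 : ∑ s : S, (![(1 : Matrix (Fin d) (Fin d) ℂ), U]) s.1.2 a s.1.1 * y s = w a := by
      have h3 := sum_S_split S
        (fun pt => (![(1 : Matrix (Fin d) (Fin d) ℂ), U]) pt.2 a pt.1 * g pt)
        (fun pt h => by simp [hg0 pt h])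
      calc ∑ s : S, (![(1 : Matrix (Fin d) (Fin d) ℂ), U]) s.1.2 a s.1.1 * y s
          = ∑ s : S, (fun pt => (![(1 : Matrix (Fin d) (Fin d) ℂ), U]) pt.2 a pt.1 * g pt) s.1
            := rfl
        _ = (∑ i, (![(1 : Matrix (Fin d) (Fin d) ℂ), U]) (0:Fin 2) a i * g (i,0))
            + ∑ i, (![(1 : Matrix (Fin d) (Fin d) ℂ), U]) (1:Fin 2) a i * g (i,1) := h3
        _ = w a := by
            have e : ∑ i, (1 : Matrix (Fin d) (Fin d) ℂ) a i * p i = p a := by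
              simp [Matrix.one_apply, ite_mul]
            simp only [Matrix.cons_val_zero, Matrix.cons_val_one, Matrix.head_cons,
              hgp, hgq, hwdef, e]
    rw [← h1, Finset.mul_sum]
    exact Finset.sum_congr rfl fun s _ => by ring
  rw [hrearr]
  have hval : ∑ a, (starRingEnd ℂ) (x a) * w a = (((1 + r : ℝ)) : ℂ) / ((nw : ℝ) : ℂ) := by
    have : ∀ a, (starRingEnd ℂ) (x a) * w a = (((‖w a‖^2 : ℝ)) : ℂ) / ((nw : ℝ) : ℂ) := by
      intro a
      rw [hxdef]
      simp only [map_div₀, Complex.conj_ofReal]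
      rw [div_mul_eq_mul_div, conj_mul_self]
    rw [Finset.sum_congr rfl fun a _ => this a, ← Finset.sum_div, ← Complex.ofReal_sum, hw_sum]
  rw [hval, norm_div, Complex.norm_real, Complex.norm_real, Real.norm_eq_abs,
    Real.norm_eq_abs, abs_of_pos hnwpos, abs_of_nonneg (by linarith : (0:ℝ) ≤ 1 + r),
    hnwdef, Real.div_sqrt]

lemma card_union_prod (I J : Finset (Fin d)) :
    (I ×ˢ ({0} : Finset (Fin 2)) ∪ J ×ˢ ({1} : Finset (Fin 2))).card
      = I.card + J.card := by
  rw [Finset.card_union_of_disjoint, Finset.card_product, Finset.card_product]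
  · simp
  · rw [Finset.disjoint_left]
    rintro ⟨i, j⟩ h1 h2
    rw [Finset.mem_product, Finset.mem_singleton] at h1 h2
    rw [h1.2] at h2
    exact absurd h2.2 (by decide)

lemma colOpNorm_nonneg (U : Matrix (Fin d) (Fin d) ℂ) (S : Finset (Fin d × Fin 2)) :
    0 ≤ colOpNorm ![(1 : Matrix (Fin d) (Fin d) ℂ), U] S :=
  Real.sSup_nonneg fun r hr => by obtain ⟨x, y, _, _, rfl⟩ := hr; exact norm_nonneg _

lemma colOpNorm_bddAbove {U : Matrix (Fin d) (Fin d) ℂ} (hent : ∀ a i, ‖U a i‖ ≤ 1)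
    (S : Finset (Fin d × Fin 2)) :
    BddAbove { r : ℝ | ∃ (x : Fin d → ℂ) (y : S → ℂ),
      (∑ a, ‖x a‖ ^ 2 = 1) ∧ (∑ s, ‖y s‖ ^ 2 = 1) ∧
      r = ‖∑ a, ∑ s : S, (starRingEnd ℂ) (x a) *
        (![(1 : Matrix (Fin d) (Fin d) ℂ), U]) s.1.2 a s.1.1 * y s‖ } :=
  ⟨(d : ℝ) * S.card, fun _ hr => colOpNorm_elt_bound hent hr⟩

end Helpers

/-- For `L = 2` measurements given by `U⁽¹⁾ = 1` (the identity) and `U⁽²⁾ = U`, the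
multi-measurement coefficients reduce to the two-basis submatrix coefficients:
`𝒮_k = 1 + s_k` for every `k = 1, …, 2d - 1`. -/
theorem stmt_15 (d : ℕ) (hd : 2 ≤ d)
    (U : Matrix (Fin d) (Fin d) ℂ) (hU : U ∈ Matrix.unitaryGroup (Fin d) ℂ)
    (k : ℕ) (hk1 : 1 ≤ k) (hk : k ≤ 2 * d - 1) :
    multiS ![(1 : Matrix (Fin d) (Fin d) ℂ), U] k = 1 + sCoef U k := by
  have hent := entry_bound U hU
  have hs0 := sCoef_nonneg U k
  unfold multiS
  set A := { r : ℝ | ∃ S : Finset (Fin d × Fin 2), S.card = k + 1 ∧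
    r = colOpNorm ![(1 : Matrix (Fin d) (Fin d) ℂ), U] S } with hAdef
  -- upper bound for elements of A
  have hA_up : ∀ r ∈ A, r ≤ Real.sqrt (1 + sCoef U k) := by
    rintro r ⟨S, hScard, rfl⟩
    unfold colOpNorm
    refine Real.sSup_le ?_ (Real.sqrt_nonneg _)
    rintro r ⟨x, y, hx, hy, rfl⟩
    exact core_upper U hU S hScard x y hx hy
  have hA_nonneg : 0 ≤ sSup A := Real.sSup_nonneg fun r hr => by
    obtain ⟨S, _, rfl⟩ := hr; exact colOpNorm_nonneg U S
  have hA_bdd : BddAbove A := ⟨Real.sqrt (1 + sCoef U k), fun r hr => hA_up r hr⟩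
  have hupper : (sSup A)^2 ≤ 1 + sCoef U k := by
    have h1 : sSup A ≤ Real.sqrt (1 + sCoef U k) :=
      Real.sSup_le hA_up (Real.sqrt_nonneg _)
    calc (sSup A)^2 ≤ (Real.sqrt (1 + sCoef U k))^2 :=
          pow_le_pow_left₀ hA_nonneg h1 2
      _ = 1 + sCoef U k := Real.sq_sqrt (by linarith)
  -- lower bound machinery
  have key : ∀ (I J : Finset (Fin d)), I.Nonempty → J.Nonempty →
      I.card + J.card = k + 1 → ∀ r' ∈ { r : ℝ | ∃ (x : I → ℂ) (y : J → ℂ),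
        (∑ i, ‖x i‖ ^ 2 = 1) ∧ (∑ j, ‖y j‖ ^ 2 = 1) ∧
        r = ‖∑ i : I, ∑ j : J, (starRingEnd ℂ) (x i) * U i.1 j.1 * y j‖ },
      1 + r' ≤ (sSup A)^2 := by
    intro I J hI hJ hcard r' hr'
    obtain ⟨x', y', hx', hy', rfl⟩ := hr'
    obtain ⟨x, y, hx, hy, hval⟩ := core_lower U hU I J x' y' hx' hy'
    have hScard : (I ×ˢ ({0} : Finset (Fin 2)) ∪ J ×ˢ ({1} : Finset (Fin 2))).card = k + 1 := by
      rw [card_union_prod, hcard]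
    set rZ := ‖∑ i : I, ∑ j : J, (starRingEnd ℂ) (x' i) * U i.1 j.1 * y' j‖ with hrZ
    have hrZ0 : 0 ≤ rZ := norm_nonneg _
    have hstep1 : Real.sqrt (1 + rZ) ≤ colOpNorm ![(1 : Matrix (Fin d) (Fin d) ℂ), U]
        (I ×ˢ ({0} : Finset (Fin 2)) ∪ J ×ˢ ({1} : Finset (Fin 2))) := by
      apply le_csSup (colOpNorm_bddAbove hent _)
      exact ⟨x, y, hx, hy, hval.symm⟩
    have hstep2 : colOpNorm ![(1 : Matrix (Fin d) (Fin d) ℂ), U]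
        (I ×ˢ ({0} : Finset (Fin 2)) ∪ J ×ˢ ({1} : Finset (Fin 2))) ≤ sSup A :=
      le_csSup hA_bdd ⟨_, hScard, rfl⟩
    have h3 : Real.sqrt (1 + rZ) ≤ sSup A := hstep1.trans hstep2
    calc 1 + rZ = (Real.sqrt (1 + rZ))^2 := (Real.sq_sqrt (by linarith)).symm
      _ ≤ (sSup A)^2 := pow_le_pow_left₀ (Real.sqrt_nonneg _) h3 2
  -- choose witness I0 J0
  obtain ⟨a, b, ha1, had, hb1, hbd, hab⟩ :
      ∃ a b : ℕ, 1 ≤ a ∧ a ≤ d ∧ 1 ≤ b ∧ b ≤ d ∧ a + b = k + 1 := by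
    rcases le_or_gt k d with h | h
    · exact ⟨k, 1, hk1, h, le_refl 1, by omega, by omega⟩
    · exact ⟨d, k + 1 - d, by omega, le_refl d, by omega, by omega, by omega⟩
  obtain ⟨I0, _, hI0card⟩ := Finset.exists_subset_card_eq
    (show a ≤ (Finset.univ : Finset (Fin d)).card by rw [Finset.card_fin]; exact had)
  obtain ⟨J0, _, hJ0card⟩ := Finset.exists_subset_card_eq
    (show b ≤ (Finset.univ : Finset (Fin d)).card by rw [Finset.card_fin]; exact hbd)
  have hI0 : I0.Nonempty := Finset.card_pos.1 (by omega)
  have hJ0 : J0.Nonempty := Finset.card_pos.1 (by omega)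
  have hIJ0card : I0.card + J0.card = k + 1 := by omega
  -- multiS ≥ 1
  have hge1 : 1 ≤ (sSup A)^2 := by
    obtain ⟨x0, hx0⟩ := exists_unit_vec hI0
    obtain ⟨y0, hy0⟩ := exists_unit_vec hJ0
    have := key I0 J0 hI0 hJ0 hIJ0card
      (‖∑ i : I0, ∑ j : J0, (starRingEnd ℂ) (x0 i) * U i.1 j.1 * y0 j‖)
      ⟨x0, y0, hx0, hy0, rfl⟩
    have h0 := norm_nonneg (∑ i : I0, ∑ j : J0, (starRingEnd ℂ) (x0 i) * U i.1 j.1 * y0 j)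
    linarith
  -- sCoef ≤ (sSup A)^2 - 1
  have hlower : 1 + sCoef U k ≤ (sSup A)^2 := by
    have h1 : sCoef U k ≤ (sSup A)^2 - 1 := by
      apply Real.sSup_le
      · rintro r ⟨I, J, hI, hJ, hcard, rfl⟩
        have h2 : subOpNorm U I J ≤ (sSup A)^2 - 1 := by
          apply Real.sSup_le
          · intro r' hr'
            have := key I J hI hJ hcard r' hr'
            linarith
          · linarith
        exact h2
      · linarith
    linarith
  linarith
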